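/- Let Λ ⊂ ℕ₀^d be a finite lower (downward closed) set with #Λ ≥ 2. Then 2·#Λ − 1 ≤ Σ_{ν∈Λ} 2^{‖ν‖₀} ≤ (#Λ)^{log 3/log 2}. -/

import Mathlib

open Real Finset

noncomputable def KTα : ℝ := Real.log 3 / Real.log 2

lemma KTα_gt_one : 1 < KTα := by
  rw [KTα, lt_div_iff₀ (Real.log_pos one_lt_two), one_mul]
  exact Real.log_lt_log two_pos (by norm_num)

lemma KTα_lt_two : KTα < 2 := by
  rw [KTα, div_lt_iff₀ (Real.log_pos one_lt_two)]
  calc Real.log 3 < Real.log 4 := Real.log_lt_log (by norm_num) (by norm_num)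
    _ = 2 * Real.log 2 := by
        rw [show (4:ℝ) = 2^(2:ℕ) by norm_num, Real.log_pow]; push_cast; ring

lemma two_rpow_KTα : (2:ℝ) ^ KTα = 3 := by
  rw [KTα, Real.rpow_def_of_pos two_pos, mul_div_cancel₀ _ (Real.log_ne_zero_of_pos_of_ne_one two_pos (by norm_num)), Real.exp_log (by norm_num)]

lemma KTα_g_concave :
    ConcaveOn ℝ (Set.Icc (0:ℝ) 1) (fun t => (1+t) ^ KTα - 1 - 2 * t ^ KTα) := by
  have hα1 := KTα_gt_one
  apply concaveOn_of_hasDerivWithinAt2_nonpos (f' := fun t => KTα * (1+t)^(KTα-1) - 2 * (KTα * t^(KTα-1)))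
    (f'' := fun t => (KTα*(KTα-1)) * (1+t)^(KTα-2) - 2 * ((KTα*(KTα-1)) * t^(KTα-2)))
    (convex_Icc 0 1)
  · apply ContinuousOn.sub
    apply ContinuousOn.sub
    · exact ((continuous_const.add continuous_id).rpow_const
        (fun x => Or.inr (le_of_lt (lt_trans one_pos hα1)))).continuousOn
    · exact continuousOn_const
    · exact (continuous_const.mul ((continuous_id.rpow_const
        (fun x => Or.inr (le_of_lt (lt_trans one_pos hα1)))))).continuousOn
  · intro t ht
    rw [interior_Icc] at ht
    have h1t : (0:ℝ) < 1 + t := by linarith [ht.1]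
    have d1 : HasDerivAt (fun t : ℝ => (1+t) ^ KTα) (1 * KTα * (1+t)^(KTα-1)) t :=
      ((hasDerivAt_id t).const_add 1).rpow_const (Or.inl (ne_of_gt h1t))
    have d2 : HasDerivAt (fun t : ℝ => t ^ KTα) (KTα * t^(KTα-1)) t :=
      Real.hasDerivAt_rpow_const (Or.inl (ne_of_gt ht.1))
    have := ((d1.sub_const 1).sub (d2.const_mul 2))
    refine HasDerivAt.hasDerivWithinAt (HasDerivAt.congr_deriv this ?_)
    ring
  · intro t ht
    rw [interior_Icc] at ht
    have h1t : (0:ℝ) < 1 + t := by linarith [ht.1]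
    have d1 : HasDerivAt (fun t : ℝ => (1+t) ^ (KTα-1)) (1 * (KTα-1) * (1+t)^(KTα-1-1)) t :=
      ((hasDerivAt_id t).const_add 1).rpow_const (Or.inl (ne_of_gt h1t))
    have d2 : HasDerivAt (fun t : ℝ => t ^ (KTα-1)) ((KTα-1) * t^(KTα-1-1)) t :=
      Real.hasDerivAt_rpow_const (Or.inl (ne_of_gt ht.1))
    have := ((d1.const_mul KTα).sub ((d2.const_mul KTα).const_mul 2))
    refine HasDerivAt.hasDerivWithinAt (HasDerivAt.congr_deriv this ?_)
    have : KTα - 1 - 1 = KTα - 2 := by ring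
    rw [this]; ring
  · intro t ht
    rw [interior_Icc] at ht
    have h1t : (0:ℝ) < 1 + t := by linarith [ht.1]
    have key : (1+t)^(KTα-2) ≤ t^(KTα-2) :=
      Real.rpow_le_rpow_of_nonpos ht.1 (by linarith) (by linarith [KTα_lt_two])
    have h2 : (0:ℝ) ≤ t^(KTα-2) := Real.rpow_nonneg ht.1.le _
    have hc : 0 ≤ KTα * (KTα - 1) := by nlinarith [KTα_gt_one]
    nlinarith [mul_le_mul_of_nonneg_left key hc]

lemma KTα_one_add_rpow {t : ℝ} (h0 : 0 ≤ t) (h1 : t ≤ 1) :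
    1 + 2 * t ^ KTα ≤ (1 + t) ^ KTα := by
  have hcon := KTα_g_concave
  have h := hcon.2 (Set.mem_Icc.2 ⟨le_refl 0, zero_le_one⟩) (Set.mem_Icc.2 ⟨zero_le_one, le_refl 1⟩)
    (by linarith : (0:ℝ) ≤ 1 - t) h0 (by ring)
  simp only [smul_eq_mul] at h
  have g0 : (1+(0:ℝ)) ^ KTα - 1 - 2 * (0:ℝ) ^ KTα = 0 := by
    rw [Real.zero_rpow (by linarith [KTα_gt_one] : KTα ≠ 0)]
    norm_num
  have g1 : (1+(1:ℝ)) ^ KTα - 1 - 2 * (1:ℝ) ^ KTα = 0 := by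
    rw [Real.one_rpow, show (1:ℝ)+1 = 2 by norm_num, two_rpow_KTα]; ring
  rw [g0, g1] at h
  have ht : (1 - t) * 0 + t * 1 = t := by ring
  rw [ht] at h
  simp only [mul_zero, mul_one] at h
  linarith

lemma KTα_key {a b : ℝ} (hb : 0 ≤ b) (hba : b ≤ a) :
    a ^ KTα + 2 * b ^ KTα ≤ (a + b) ^ KTα := by
  rcases eq_or_lt_of_le (hb.trans hba) with h | ha
  · have ha0 : a = 0 := h.symm
    have hb0 : b = 0 := le_antisymm (ha0 ▸ hba) hb
    simp [ha0, hb0, Real.zero_rpow (by linarith [KTα_gt_one] : KTα ≠ 0)]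
  · have ht0 : 0 ≤ b / a := div_nonneg hb ha.le
    have ht1 : b / a ≤ 1 := (div_le_one ha).2 hba
    have h := KTα_one_add_rpow ht0 ht1
    have hmul := mul_le_mul_of_nonneg_left h (Real.rpow_nonneg ha.le KTα)
    rw [← Real.mul_rpow ha.le (by linarith : (0:ℝ) ≤ 1 + b/a)] at hmul
    rw [mul_add, mul_one, ← mul_assoc, mul_comm (a ^ KTα) 2, mul_assoc,
      ← Real.mul_rpow ha.le ht0, mul_div_cancel₀ _ (ne_of_gt ha)] at hmul
    calc a ^ KTα + 2 * b ^ KTα ≤ (a * (1 + b/a)) ^ KTα := hmul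
      _ = (a + b) ^ KTα := by rw [mul_add, mul_one, mul_div_cancel₀ _ (ne_of_gt ha)]


lemma KTα_sum (f : ℕ → ℝ) (h0 : ∀ j, 0 ≤ f j) (hle : ∀ j, f j ≤ f 0) (M : ℕ) :
    f 0 ^ KTα + 2 * ∑ j ∈ Finset.Ioc 0 M, f j ^ KTα
      ≤ (∑ j ∈ Finset.range (M+1), f j) ^ KTα := by
  induction M with
  | zero => simp
  | succ M ih =>
      rw [Finset.sum_Ioc_succ_top (Nat.zero_le _), Finset.sum_range_succ]
      have hfa : f (M+1) ≤ ∑ j ∈ Finset.range (M+1), f j := by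
        calc f (M+1) ≤ f 0 := hle _
          _ ≤ ∑ j ∈ Finset.range (M+1), f j :=
            Finset.single_le_sum (fun j _ => h0 j) (Finset.mem_range.2 (Nat.succ_pos _))
      have := KTα_key (h0 (M+1)) hfa
      linarith

lemma KT_upper : ∀ (d : ℕ) (Λ : Finset (Fin d → ℕ)),
    (∀ ν ∈ Λ, ∀ μ : Fin d → ℕ, (∀ k, μ k ≤ ν k) → μ ∈ Λ) →
    ((∑ ν ∈ Λ, 2 ^ (Finset.univ.filter (fun k => ν k ≠ 0)).card : ℕ) : ℝ)
      ≤ (Λ.card : ℝ) ^ KTα := by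
  intro d
  induction d with
  | zero =>
      intro Λ _
      have hsum : (∑ ν ∈ Λ, 2 ^ (Finset.univ.filter (fun k => ν k ≠ 0)).card : ℕ) = Λ.card := by
        rw [Finset.card_eq_sum_ones]
        apply Finset.sum_congr rfl
        intro ν _
        simp [Finset.univ_eq_empty]
      rw [hsum]
      have hc1 : Λ.card ≤ 1 := Finset.card_le_one.2 (fun a _ b _ => Subsingleton.elim a b)
      interval_cases h : Λ.card
      · simp [Real.zero_rpow (by linarith [KTα_gt_one] : KTα ≠ 0)]
      · simp
  | succ d ih =>
      intro Λ hlow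
      set L := Fin.last d with hL
      set M := Λ.sup (fun ν => ν L) with hM
      set S : ℕ → Finset (Fin d → ℕ) :=
        fun j => (Λ.filter (fun ν => ν L = j)).image (fun ν k => ν (Fin.castSucc k)) with hS
      -- injectivity on fibers
      have hinj : ∀ j : ℕ, ∀ x ∈ Λ.filter (fun ν => ν L = j), ∀ y ∈ Λ.filter (fun ν => ν L = j),
          (fun k => x (Fin.castSucc k)) = (fun k => y (Fin.castSucc k)) → x = y := by
        intro j x hx y hy hxy
        rw [Finset.mem_filter] at hx hy
        funext k
        induction k using Fin.lastCases with
        | last => rw [hx.2, hy.2]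
        | cast k => exact congrFun hxy k
      have hcardS : ∀ j, (S j).card = (Λ.filter (fun ν => ν L = j)).card := by
        intro j; exact Finset.card_image_of_injOn (fun x hx y hy => hinj j x hx y hy)
      -- membership of snoc
      have hsnoc_mem : ∀ (j j' : ℕ), j' ≤ j → ∀ ν' ∈ S j, Fin.snoc ν' j' ∈ Λ := by
        intro j j' hj' ν' hν'
        rw [hS, Finset.mem_image] at hν'
        obtain ⟨ν, hν, hνeq⟩ := hν'
        rw [Finset.mem_filter] at hν
        refine hlow ν hν.1 _ ?_
        intro k
        induction k using Fin.lastCases with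
        | last => rw [Fin.snoc_last, hν.2]; exact hj'
        | cast k => rw [Fin.snoc_castSucc, ← hνeq]
      -- S j is lower
      have hSlow : ∀ j, ∀ ν' ∈ S j, ∀ μ : Fin d → ℕ, (∀ k, μ k ≤ ν' k) → μ ∈ S j := by
        intro j ν' hν' μ hμ
        have hmem : Fin.snoc ν' j ∈ Λ := hsnoc_mem j j le_rfl ν' hν'
        have hmem2 : (Fin.snoc μ j : Fin (d+1) → ℕ) ∈ Λ := by
          refine hlow _ hmem _ ?_
          intro k
          induction k using Fin.lastCases with
          | last => simp [Fin.snoc_last]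
          | cast k => simp only [Fin.snoc_castSucc]; exact hμ k
        rw [hS, Finset.mem_image]
        refine ⟨Fin.snoc μ j, Finset.mem_filter.2 ⟨hmem2, by simp [hL]⟩, ?_⟩
        funext k; simp [Fin.snoc_castSucc]
      -- S j ⊆ S 0
      have hsub : ∀ j, S j ⊆ S 0 := by
        intro j ν' hν'
        have hmem : (Fin.snoc ν' 0 : Fin (d+1) → ℕ) ∈ Λ := hsnoc_mem j 0 (Nat.zero_le _) ν' hν'
        rw [hS, Finset.mem_image]
        refine ⟨Fin.snoc ν' 0, Finset.mem_filter.2 ⟨hmem, by simp [hL]⟩, ?_⟩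
        funext k; simp [Fin.snoc_castSucc]
      -- maps-to for fiberwise decomposition
      have hmaps : ∀ ν ∈ Λ, ν L ∈ Finset.range (M+1) := by
        intro ν hν
        exact Finset.mem_range.2 (Nat.lt_succ_of_le (Finset.le_sup (f := fun ν => ν L) hν))
      -- cardinality partition
      have hcard : Λ.card = ∑ j ∈ Finset.range (M+1), (S j).card := by
        rw [Finset.card_eq_sum_card_fiberwise hmaps]
        exact Finset.sum_congr rfl (fun j _ => (hcardS j).symm)
      -- exponent splitting
      have hexp : ∀ (j : ℕ), ∀ ν ∈ Λ.filter (fun ν => ν L = j),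
          (Finset.univ.filter (fun k : Fin (d+1) => ν k ≠ 0)).card
            = (Finset.univ.filter (fun k : Fin d => ν (Fin.castSucc k) ≠ 0)).card
              + (if j = 0 then 0 else 1) := by
        intro j ν hν
        rw [Finset.mem_filter] at hν
        rw [Finset.card_filter, Finset.card_filter, Fin.sum_univ_castSucc]
        congr 1
        rw [hν.2]
        by_cases h : j = 0 <;> simp [h]
      -- per-fiber sums
      have hfiber : ∀ j ∈ Finset.range (M+1),
          (∑ ν ∈ Λ.filter (fun ν => ν L = j),
            2 ^ (Finset.univ.filter (fun k : Fin (d+1) => ν k ≠ 0)).card : ℕ)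
          = (if j = 0 then 1 else 2) *
            ∑ ν' ∈ S j, 2 ^ (Finset.univ.filter (fun k : Fin d => ν' k ≠ 0)).card := by
        intro j _
        rw [hS, Finset.sum_image (hinj j)]
        rw [Finset.mul_sum]
        apply Finset.sum_congr rfl
        intro ν hν
        rw [hexp j ν hν]
        by_cases h : j = 0 <;> simp [h, pow_succ, Nat.mul_comm]
      -- fiberwise IH bound, assembled
      have hsplit : Finset.range (M+1) = insert 0 (Finset.Ioc 0 M) := by
        rw [Finset.range_eq_Ico, Finset.Ico_add_one_right_eq_Icc, ← Finset.Ioc_insert_left (Nat.zero_le M)]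
      have hdecomp : (∑ ν ∈ Λ, 2 ^ (Finset.univ.filter (fun k : Fin (d+1) => ν k ≠ 0)).card : ℕ)
          = (∑ ν' ∈ S 0, 2 ^ (Finset.univ.filter (fun k : Fin d => ν' k ≠ 0)).card)
            + 2 * ∑ j ∈ Finset.Ioc 0 M,
                ∑ ν' ∈ S j, 2 ^ (Finset.univ.filter (fun k : Fin d => ν' k ≠ 0)).card := by
        rw [← Finset.sum_fiberwise_of_maps_to hmaps
          (fun ν => 2 ^ (Finset.univ.filter (fun k : Fin (d+1) => ν k ≠ 0)).card)]
        rw [Finset.sum_congr rfl hfiber, hsplit, Finset.sum_insert (by simp), if_pos rfl,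
          one_mul, Finset.mul_sum]
        congr 1
        apply Finset.sum_congr rfl
        intro j hj
        rw [if_neg (Finset.mem_Ioc.1 hj).1.ne']
      -- apply IH to each slice and the sequence lemma
      set f : ℕ → ℝ := fun j => ((S j).card : ℝ) with hf
      have hIH : ∀ j, ((∑ ν' ∈ S j, 2 ^ (Finset.univ.filter (fun k : Fin d => ν' k ≠ 0)).card : ℕ) : ℝ)
          ≤ f j ^ KTα := fun j => ih (S j) (hSlow j)
      have hseq := KTα_sum f (fun j => Nat.cast_nonneg _)
        (fun j => Nat.cast_le.2 (Finset.card_le_card (hsub j))) M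
      have hsumIoc : ((∑ j ∈ Finset.Ioc 0 M,
            ∑ ν' ∈ S j, 2 ^ (Finset.univ.filter (fun k : Fin d => ν' k ≠ 0)).card : ℕ) : ℝ)
          ≤ ∑ j ∈ Finset.Ioc 0 M, f j ^ KTα := by
        push_cast
        refine Finset.sum_le_sum (fun j _ => ?_)
        have := hIH j; push_cast at this; exact this
      have hcardR : (Λ.card : ℝ) = ∑ j ∈ Finset.range (M+1), f j := by
        rw [hcard]; push_cast; rfl
      have hcast : (((∑ ν' ∈ S 0, 2 ^ (Finset.univ.filter (fun k : Fin d => ν' k ≠ 0)).card)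
            + 2 * ∑ j ∈ Finset.Ioc 0 M,
                ∑ ν' ∈ S j, 2 ^ (Finset.univ.filter (fun k : Fin d => ν' k ≠ 0)).card : ℕ) : ℝ)
          = ((∑ ν' ∈ S 0, 2 ^ (Finset.univ.filter (fun k : Fin d => ν' k ≠ 0)).card : ℕ) : ℝ)
            + 2 * ((∑ j ∈ Finset.Ioc 0 M,
                ∑ ν' ∈ S j, 2 ^ (Finset.univ.filter (fun k : Fin d => ν' k ≠ 0)).card : ℕ) : ℝ) := by
        push_cast; ring
      rw [hdecomp, hcardR, hcast]
      have h0 := hIH 0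
      linarith


theorem KT_lower_set_bounds
    (d : ℕ) (Λ : Finset (Fin d → ℕ))
    (hlow : ∀ ν ∈ Λ, ∀ μ : Fin d → ℕ, (∀ k, μ k ≤ ν k) → μ ∈ Λ)
    (hcard : 2 ≤ Λ.card) :
    2 * Λ.card - 1 ≤ ∑ ν ∈ Λ, 2 ^ (Finset.univ.filter (fun k => ν k ≠ 0)).card ∧
      ((∑ ν ∈ Λ, 2 ^ (Finset.univ.filter (fun k => ν k ≠ 0)).card : ℕ) : ℝ)
        ≤ (Λ.card : ℝ) ^ (Real.log 3 / Real.log 2) := by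
  constructor
  · -- lower bound
    have hne : Λ.Nonempty := Finset.card_pos.1 (by omega)
    obtain ⟨ν₀, hν₀⟩ := hne
    have hz : (fun _ => 0 : Fin d → ℕ) ∈ Λ := hlow ν₀ hν₀ _ (fun k => Nat.zero_le _)
    rw [← Finset.add_sum_erase Λ _ hz]
    have h1 : (2:ℕ) ^ (Finset.univ.filter (fun k : Fin d =>
        (fun _ => 0 : Fin d → ℕ) k ≠ 0)).card = 1 := by simp
    have h2 : ∀ ν ∈ Λ.erase (fun _ => 0 : Fin d → ℕ),
        2 ≤ (2:ℕ) ^ (Finset.univ.filter (fun k => ν k ≠ 0)).card := by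
      intro ν hν
      have hne0 : ν ≠ (fun _ => 0) := (Finset.mem_erase.1 hν).1
      have : ∃ k, ν k ≠ 0 := by
        by_contra h
        push_neg at h
        exact hne0 (funext h)
      obtain ⟨k, hk⟩ := this
      have hpos : 0 < (Finset.univ.filter (fun k => ν k ≠ 0)).card :=
        Finset.card_pos.2 ⟨k, Finset.mem_filter.2 ⟨Finset.mem_univ k, hk⟩⟩
      calc (2:ℕ) = 2 ^ 1 := (pow_one 2).symm
        _ ≤ 2 ^ (Finset.univ.filter (fun k => ν k ≠ 0)).card :=
          Nat.pow_le_pow_right (by norm_num) hpos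
    have h3 : 2 * (Λ.erase (fun _ => 0 : Fin d → ℕ)).card
        ≤ ∑ ν ∈ Λ.erase (fun _ => 0 : Fin d → ℕ),
            2 ^ (Finset.univ.filter (fun k => ν k ≠ 0)).card := by
      calc 2 * (Λ.erase (fun _ => 0 : Fin d → ℕ)).card
          = ∑ _ν ∈ Λ.erase (fun _ => 0 : Fin d → ℕ), 2 := by
            rw [Finset.sum_const, smul_eq_mul, mul_comm]
        _ ≤ _ := Finset.sum_le_sum h2
    rw [h1]
    have hec : (Λ.erase (fun _ => 0 : Fin d → ℕ)).card = Λ.card - 1 :=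
      Finset.card_erase_of_mem hz
    rw [hec] at h3
    have key : 2 * Λ.card - 1 = 1 + 2 * (Λ.card - 1) := by
      clear * - hcard; omega
    rw [key]
    exact Nat.add_le_add_left h3 1
  · -- upper bound
    have := KT_upper d Λ hlow
    rwa [KTα] at this
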